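/- Let (X,d) be a metric space whose underlying set X is finite and nonempty, and suppose (X,d) satisfies the tie-breaking rule. If (X,d) satisfies the fourth-point condition, then the basic geodesic graph of (X,d) is a tree (connected and acyclic). -/

import Mathlib

/-- A chain of intermediate points witnessing that the pair `{x, x'}` is non-basic:
`k ≥ 1` pairwise distinct intermediate points, each different from `x` and `x'`,
along which the distances sum to `dist x x'`. -/
def IsNonBasicChain {X : Type*} [MetricSpace X] (x x' : X) : Prop :=
  ∃ (k : ℕ) (p : Fin (k + 2) → X), 1 ≤ k ∧ Function.Injective p ∧
    p 0 = x ∧ p (Fin.last (k + 1)) = x' ∧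
    dist x x' = ∑ i : Fin (k + 1), dist (p i.castSucc) (p i.succ)

/-- The unordered pair `{x, x'}` is a non-basic edge. -/
def IsNonBasicEdge {X : Type*} [MetricSpace X] (x x' : X) : Prop :=
  IsNonBasicChain x x' ∨ IsNonBasicChain x' x

/-- The unordered pair `{x, x'}` is a basic edge. -/
def IsBasicEdge {X : Type*} [MetricSpace X] (x x' : X) : Prop :=
  x ≠ x' ∧ ¬ IsNonBasicEdge x x'

/-- The basic geodesic graph: the simple graph on `X` whose edges are the basic edges. -/
def basicGeodesicGraph (X : Type*) [MetricSpace X] : SimpleGraph X where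
  Adj x y := IsBasicEdge x y
  symm := ⟨fun x y ⟨h1, h2⟩ => ⟨h1.symm, fun h => h2 h.symm⟩⟩
  loopless := ⟨fun x ⟨h1, _⟩ => h1 rfl⟩

/-- The fourth-point condition. -/
def FourthPointCondition (X : Type*) [MetricSpace X] : Prop :=
  ∀ x y z : X, ∃ p : X,
    dist x p + dist y p + dist z p = (dist x y + dist y z + dist z x) / 2

/-- The tie-breaking rule: distances of distinct unordered pairs are distinct. -/
def TieBreakingRule (X : Type*) [MetricSpace X] : Prop :=
  ∀ x y u v : X, x ≠ y → u ≠ v → ({x, y} : Set X) ≠ {u, v} → dist x y ≠ dist u v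

section Aux
variable {X : Type*} [MetricSpace X]

/-- `z` is strictly between `x` and `y`. -/
def MBtw (z x y : X) : Prop := z ≠ x ∧ z ≠ y ∧ dist x y = dist x z + dist z y

lemma MBtw.symm' {z x y : X} (h : MBtw z x y) : MBtw z y x :=
  ⟨h.2.1, h.1, by rw [dist_comm y x, h.2.2]; ring_nf; rw [dist_comm x z, dist_comm z y]; ring⟩

lemma chain_to_mbtw {x y : X} (h : IsNonBasicChain x y) : ∃ z, MBtw z x y := by
  obtain ⟨k, p, hk, hinj, h0, hl, hsum⟩ := h
  set z := p ⟨1, by omega⟩ with hz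
  refine ⟨z, ?_, ?_, ?_⟩
  · intro hzx
    rw [← h0] at hzx
    have := hinj hzx
    simp [Fin.ext_iff] at this
  · intro hzy
    rw [← hl] at hzy
    have := hinj hzy
    simp [Fin.ext_iff, Fin.last] at this
    omega
  · set f : ℕ → X := fun n => p ⟨min n (k + 1), by omega⟩ with hf
    have hf0 : f 0 = x := by rw [hf]; simpa using h0
    have hf1 : f 1 = z := by rw [hf, hz]; simp [Fin.ext_iff]
    have hfl : f (k + 1) = y := by rw [hf]; simp [Fin.ext_iff]; exact hl
    have hsum' : dist x y = ∑ i ∈ Finset.range (k + 1), dist (f i) (f (i + 1)) := by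
      rw [hsum]
      rw [← Fin.sum_univ_eq_sum_range (fun i => dist (f i) (f (i + 1)))]
      apply Finset.sum_congr rfl
      intro i _
      have hi : (i : ℕ) < k + 1 := i.isLt
      congr 1 <;> rw [hf] <;> congr 1 <;> simp [Fin.ext_iff, Fin.castSucc, Fin.succ] <;> omega
    have h1 : dist z y ≤ ∑ i ∈ Finset.range k, dist (f (i + 1)) (f (i + 1 + 1)) := by
      have := dist_le_range_sum_dist (fun n => f (n + 1)) k
      simpa [hf1, hfl] using this
    have h2 : ∑ i ∈ Finset.range (k + 1), dist (f i) (f (i + 1)) =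
        (∑ i ∈ Finset.range k, dist (f (i + 1)) (f (i + 1 + 1))) + dist (f 0) (f 1) :=
      Finset.sum_range_succ' (fun i => dist (f i) (f (i + 1))) k
    have h3 : dist x y ≤ dist x z + dist z y := dist_triangle x z y
    have h4 : dist x z = dist (f 0) (f 1) := by rw [hf0, hf1]
    linarith

lemma mbtw_to_chain {x y z : X} (hxy : x ≠ y) (h : MBtw z x y) : IsNonBasicChain x y := by
  obtain ⟨hzx, hzy, hd⟩ := h
  refine ⟨1, ![x, z, y], le_refl 1, ?_, rfl, rfl, ?_⟩
  · intro a b hab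
    fin_cases a <;> fin_cases b <;> simp_all
  · rw [hd]
    simp [Fin.sum_univ_two]

lemma isBasicEdge_iff {x y : X} : IsBasicEdge x y ↔ x ≠ y ∧ ∀ z, ¬ MBtw z x y := by
  constructor
  · rintro ⟨hne, hnb⟩
    exact ⟨hne, fun z hz => hnb (Or.inl (mbtw_to_chain hne hz))⟩
  · rintro ⟨hne, hnb⟩
    refine ⟨hne, fun h => ?_⟩
    rcases h with h | h
    · obtain ⟨z, hz⟩ := chain_to_mbtw h
      exact hnb z hz
    · obtain ⟨z, hz⟩ := chain_to_mbtw h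
      exact hnb z hz.symm'

lemma median (h4 : FourthPointCondition X) (x y z : X) :
    ∃ p : X, dist x y = dist x p + dist y p ∧ dist y z = dist y p + dist z p ∧
      dist x z = dist x p + dist z p := by
  obtain ⟨p, hp⟩ := h4 x y z
  have t1 : dist x y ≤ dist x p + dist y p := by
    have := dist_triangle x p y; rw [dist_comm p y] at this; linarith
  have t2 : dist y z ≤ dist y p + dist z p := by
    have := dist_triangle y p z; rw [dist_comm p z] at this; linarith
  have t3 : dist x z ≤ dist x p + dist z p := by
    have := dist_triangle x p z; rw [dist_comm p z] at this; linarith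
  have hzx : dist z x = dist x z := dist_comm z x
  exact ⟨p, by linarith, by linarith, by linarith⟩

/-- Connectivity of the basic geodesic graph. -/
lemma basic_reachable [Fintype X] (x y : X) : (basicGeodesicGraph X).Reachable x y := by
  generalize hN : (Finset.univ.filter
      (fun q : X × X => dist q.1 q.2 < dist x y)).card = N
  induction N using Nat.strong_induction_on generalizing x y with
  | _ N ih =>
    by_cases hxy : x = y
    · exact hxy ▸ SimpleGraph.Reachable.refl x
    by_cases hb : IsBasicEdge x y
    · exact SimpleGraph.Adj.reachable hb
    · have hnb : IsNonBasicEdge x y := by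
        by_contra h
        exact hb ⟨hxy, h⟩
      have : ∃ z, MBtw z x y := by
        rcases hnb with h | h
        · exact chain_to_mbtw h
        · obtain ⟨z, hz⟩ := chain_to_mbtw h
          exact ⟨z, hz.symm'⟩
      obtain ⟨z, hzx, hzy, hd⟩ := this
      have hpos1 : 0 < dist x z := dist_pos.2 (fun h => hzx h.symm)
      have hpos2 : 0 < dist z y := dist_pos.2 hzy
      have hlt1 : dist x z < dist x y := by linarith
      have hlt2 : dist z y < dist x y := by linarith
      have key : ∀ u v : X, dist u v < dist x y →
          (Finset.univ.filter (fun q : X × X => dist q.1 q.2 < dist u v)).card < N := by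
        intro u v huv
        rw [← hN]
        apply Finset.card_lt_card
        constructor
        · intro q hq
          simp only [Finset.mem_filter, Finset.mem_univ, true_and] at hq ⊢
          linarith
        · intro hsub
          have := hsub (by
            simp only [Finset.mem_filter, Finset.mem_univ, true_and]
            exact huv : (u, v) ∈ Finset.univ.filter
              (fun q : X × X => dist q.1 q.2 < dist x y))
          simp only [Finset.mem_filter, Finset.mem_univ, true_and] at this
          exact lt_irrefl _ this
      have r1 : (basicGeodesicGraph X).Reachable x z := ih _ (key x z hlt1) x z rfl
      have r2 : (basicGeodesicGraph X).Reachable z y := ih _ (key z y hlt2) z y rfl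
      exact r1.trans r2

end Aux

section Cycle
open SimpleGraph

lemma walk_getVert_injOn {V : Type*} {G : SimpleGraph V} {u v : V} (p : G.Walk u v)
    (hnd : p.support.Nodup) :
    ∀ i j, i ≤ p.length → j ≤ p.length → p.getVert i = p.getVert j → i = j := by
  induction p with
  | nil => intro i j hi hj _; simp at hi hj; omega
  | cons h q ih =>
    intro i j hi hj hij
    simp only [Walk.support_cons, List.nodup_cons] at hnd
    match i, j with
    | 0, 0 => rfl
    | 0, (m+1) =>
      exfalso
      apply hnd.1
      rw [Walk.mem_support_iff_exists_getVert]
      refine ⟨m, ?_, by simpa using hj⟩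
      rw [← Walk.getVert_cons_succ q h, ← hij, Walk.getVert_zero]
    | (m+1), 0 =>
      exfalso
      apply hnd.1
      rw [Walk.mem_support_iff_exists_getVert]
      refine ⟨m, ?_, by simpa using hi⟩
      rw [← Walk.getVert_cons_succ q h, hij, Walk.getVert_zero]
    | (m+1), (l+1) =>
      have := ih hnd.2 m l (by simpa using hi) (by simpa using hj)
        (by rwa [Walk.getVert_cons_succ, Walk.getVert_cons_succ] at hij)
      omega

lemma cycle_getVert_injOn {V : Type*} {G : SimpleGraph V} {v : V} {c : G.Walk v v}
    (hc : c.IsCycle) :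
    ∀ i j, 1 ≤ i → i ≤ c.length → 1 ≤ j → j ≤ c.length → c.getVert i = c.getVert j → i = j := by
  have hnil : ¬ c.Nil := hc.not_nil
  have hnd : c.tail.support.Nodup := by
    rw [Walk.support_tail_of_not_nil _ hnil]
    exact ((Walk.isCycle_def c).1 hc).2.2
  intro i j hi1 hi2 hj1 hj2 hij
  obtain ⟨i, rfl⟩ : ∃ m, i = m + 1 := ⟨i - 1, by omega⟩
  obtain ⟨j, rfl⟩ : ∃ m, j = m + 1 := ⟨j - 1, by omega⟩
  have hl : c.tail.length + 1 = c.length := Walk.length_tail_add_one hnil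
  have := walk_getVert_injOn c.tail hnd i j (by omega) (by omega)
    (by rwa [Walk.getVert_tail, Walk.getVert_tail])
  omega

/-- Acyclicity of the basic geodesic graph. -/
lemma basic_acyclic {X : Type*} [MetricSpace X]
    (htie : TieBreakingRule X) (h4 : FourthPointCondition X) :
    (basicGeodesicGraph X).IsAcyclic := by
  intro v c hc
  set n := c.length with hnlen
  have hn : 3 ≤ n := hc.three_le_length
  set f : ℕ → X := c.getVert with hfdef
  have hf0n : f n = f 0 := by rw [hfdef, hnlen]; simp
  have hadj : ∀ i, i < n → (basicGeodesicGraph X).Adj (f i) (f (i + 1)) :=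
    fun i hi => c.adj_getVert_succ hi
  have hinj : ∀ i j, 1 ≤ i → i ≤ n → 1 ≤ j → j ≤ n → f i = f j → i = j :=
    cycle_getVert_injOn hc
  -- adjacency around the cycle
  have hEadj : ∀ a, a < n → (basicGeodesicGraph X).Adj (f a) (f ((a + 1) % n)) := by
    intro a ha
    rcases Nat.lt_or_ge (a + 1) n with h | h
    · rw [Nat.mod_eq_of_lt h]; exact hadj a ha
    · have ha1 : a + 1 = n := by omega
      have : (a + 1) % n = 0 := by rw [ha1, Nat.mod_self]
      rw [this, ← hf0n, ← ha1]
      exact hadj a ha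
  -- choose the longest edge
  obtain ⟨i0, hi0mem, hi0max⟩ := Finset.exists_max_image (Finset.range n)
    (fun a => dist (f a) (f ((a + 1) % n))) ⟨0, by simp; omega⟩
  simp only [Finset.mem_range] at hi0mem
  set g : ℕ → X := fun j => f ((i0 + j) % n) with hgdef
  have hnpos : 0 < n := by omega
  have hg1 : ∀ j, g (j + 1) = f (((i0 + j) % n + 1) % n) := by
    intro j
    rw [hgdef]
    simp only
    congr 1
    conv_lhs => rw [← Nat.add_assoc, Nat.add_mod (i0 + j) 1 n]
    congr 1
    rw [Nat.mod_eq_of_lt (show 1 < n by omega)]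
  have hgadj : ∀ j, (basicGeodesicGraph X).Adj (g j) (g (j + 1)) := by
    intro j
    rw [hg1]
    exact hEadj _ (Nat.mod_lt _ hnpos)
  have hg0 : g 0 = f i0 := by rw [hgdef]; simp [Nat.mod_eq_of_lt hi0mem]
  have hgmax : ∀ j, dist (g j) (g (j + 1)) ≤ dist (g 0) (g 1) := by
    intro j
    rw [hg1, hg0]
    have hg01 : g 1 = f ((i0 + 1) % n) := by
      have := hg1 0
      simpa [Nat.mod_eq_of_lt hi0mem] using this
    rw [hg01]
    exact hi0max _ (Finset.mem_range.2 (Nat.mod_lt _ hnpos))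
  have hginj : ∀ j j', j < n → j' < n → g j = g j' → j = j' := by
    intro j j' hj hj' hgg
    rw [hgdef] at hgg
    simp only at hgg
    set a := (i0 + j) % n with hadef
    set b := (i0 + j') % n with hbdef
    have ha : a < n := Nat.mod_lt _ hnpos
    have hb : b < n := Nat.mod_lt _ hnpos
    have hab : a = b := by
      rcases Nat.eq_zero_or_pos a with h0a | h1a
      · rcases Nat.eq_zero_or_pos b with h0b | h1b
        · omega
        · exfalso
          rw [h0a, ← hf0n] at hgg
          have := hinj n b (by omega) le_rfl h1b (by omega) hgg
          omega
      · rcases Nat.eq_zero_or_pos b with h0b | h1b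
        · exfalso
          rw [h0b, ← hf0n] at hgg
          have := hinj a n h1a (by omega) (by omega) le_rfl hgg
          omega
        · exact hinj a b h1a (by omega) h1b (by omega) hgg
    have : (i0 + j) % n = (i0 + j') % n := by rw [← hadef, ← hbdef, hab]
    have hmeq : j % n = j' % n := Nat.ModEq.add_left_cancel' i0 this
    rwa [Nat.mod_eq_of_lt hj, Nat.mod_eq_of_lt hj'] at hmeq
  have hgn : g n = g 0 := by
    rw [hg0]
    show f ((i0 + n) % n) = f i0
    rw [Nat.add_mod_right, Nat.mod_eq_of_lt hi0mem]
  have hne01 : g 0 ≠ g 1 := (hgadj 0).ne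
  have hstrict : ∀ j, 1 ≤ j → j < n → dist (g j) (g (j + 1)) < dist (g 0) (g 1) := by
    intro j hj1 hjn
    refine lt_of_le_of_ne (hgmax j) ?_
    apply htie _ _ _ _ (hgadj j).ne hne01
    intro hset
    rw [Set.pair_eq_pair_iff] at hset
    rcases hset with ⟨h1, _⟩ | ⟨h1, h2⟩
    · have := hginj j 0 hjn (by omega) h1
      omega
    · have hj1' := hginj j 1 hjn (by omega) h1
      subst hj1'
      have := hginj 2 0 (by omega) (by omega) h2
      omega
  have hbe : IsBasicEdge (g 0) (g 1) := hgadj 0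
  have hdich : ∀ w : X,
      dist (g 0) w = dist (g 0) (g 1) + dist (g 1) w ∨
      dist (g 1) w = dist (g 0) (g 1) + dist (g 0) w := by
    intro w
    obtain ⟨p, m1, m2, m3⟩ := median h4 (g 0) (g 1) w
    by_cases hp0 : p = g 0
    · right
      rw [hp0] at m2
      have c1 : dist (g 1) (g 0) = dist (g 0) (g 1) := _root_.dist_comm _ _
      have c2 : dist w (g 0) = dist (g 0) w := _root_.dist_comm _ _
      linarith
    by_cases hp1 : p = g 1
    · left
      rw [hp1] at m3
      have c2 : dist w (g 1) = dist (g 1) w := _root_.dist_comm _ _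
      linarith
    · exfalso
      have : MBtw p (g 0) (g 1) :=
        ⟨hp0, hp1, by rw [_root_.dist_comm p (g 1)]; linarith⟩
      exact (isBasicEdge_iff.1 hbe).2 p this
  have claim : ∀ j, 2 ≤ j → j < n →
      dist (g 0) (g j) = dist (g 0) (g 1) + dist (g 1) (g j) := by
    intro j
    induction j with
    | zero => omega
    | succ j ihj =>
      intro h2 hlt
      rcases hdich (g (j + 1)) with h | h
      · exact h
      · exfalso
        by_cases hj2 : 2 ≤ j
        · have hP := ihj hj2 (by omega)
          have t1 : dist (g 0) (g j) ≤ dist (g 0) (g (j + 1)) + dist (g (j + 1)) (g j) :=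
            dist_triangle _ _ _
          have t2 : dist (g 1) (g (j + 1)) ≤ dist (g 1) (g j) + dist (g j) (g (j + 1)) :=
            dist_triangle _ _ _
          have hs : dist (g j) (g (j + 1)) < dist (g 0) (g 1) := hstrict j (by omega) (by omega)
          have hcm : dist (g (j + 1)) (g j) = dist (g j) (g (j + 1)) := dist_comm _ _
          linarith
        · have hj1 : j = 1 := by omega
          subst hj1
          have hs : dist (g 1) (g 2) < dist (g 0) (g 1) := hstrict 1 le_rfl (by omega)
          have hD : 0 < dist (g 0) (g 2) := by
            refine dist_pos.2 fun he => ?_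
            have := hginj 0 2 (by omega) (by omega) he
            omega
          linarith
  have hP := claim (n - 1) (by omega) (by omega)
  have hlast : dist (g (n - 1)) (g (n - 1 + 1)) = dist (g 0) (g (n - 1)) := by
    have hsub : n - 1 + 1 = n := by omega
    rw [hsub, hgn]
    exact _root_.dist_comm _ _
  have hs := hstrict (n - 1) (by omega) (by omega)
  have hE : 0 ≤ dist (g 1) (g (n - 1)) := dist_nonneg
  linarith

end Cycle

/-- Under the tie-breaking rule, the fourth-point condition implies that the basic
geodesic graph of a finite metric space is a tree. -/
theorem basicGeodesicGraph_isTree_of_fourthPointCondition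
    {X : Type*} [MetricSpace X] [Fintype X] [Nonempty X]
    (htie : TieBreakingRule X) (h4 : FourthPointCondition X) :
    (basicGeodesicGraph X).IsTree := by
  constructor
  · exact ⟨fun x y => basic_reachable x y⟩
  · exact basic_acyclic htie h4
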